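/- Let f : X → X be a bijection of a set X, A : X → GL(d,ℝ) a map with cocycle A^n_x (n ∈ ℤ), λ ∈ ℝ, ε > 0, and x ∈ X. Let u ∈ ℝ^d be a vector such that the series S_0(u) := Σ_{n∈ℤ} ‖A^n_x u‖²·e^{−2λn − ε|n|} converges, and for k ∈ ℤ set S_k(u) := Σ_{n∈ℤ} ‖A^n_{f^k x}(A^k_x u)‖²·e^{−2λn − ε|n|} (which then also converges, since A^n_{f^k x} ∘ A^k_x = A^{n+k}_x). Then for every k ∈ ℤ: e^{kλ − ε|k|}·√S_0(u) ≤ √S_k(u) ≤ e^{kλ + ε|k|}·√S_0(u). -/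

import Mathlib

set_option maxHeartbeats 1000000


/-- The cocycle generated by `A : X → GL(d,ℝ)` over `f`. -/
noncomputable def cocycle {X : Type*} {V : Type*} [NormedAddCommGroup V] [NormedSpace ℝ V]
    (f : X → X) (A : X → (V →L[ℝ] V)ˣ) : ℕ → X → (V →L[ℝ] V)ˣ
  | 0, _ => 1
  | n + 1, x => cocycle f A n (f x) * A x

/-- The two-sided cocycle: `A^n_x` for `n ∈ ℤ`, with `A^{-n}_x = (A^n_{f^{-n}x})⁻¹`. -/
noncomputable def cocycleZ {X : Type*} {V : Type*} [NormedAddCommGroup V] [NormedSpace ℝ V]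
    (f : X ≃ X) (A : X → (V →L[ℝ] V)ˣ) : ℤ → X → (V →L[ℝ] V)ˣ
  | Int.ofNat n, x => cocycle (⇑f) A n x
  | Int.negSucc n, x => (cocycle (⇑f) A (n + 1) ((⇑f.symm)^[n + 1] x))⁻¹

/-- The `n`-th iterate of a bijection `f`, for `n ∈ ℤ`. -/
def iterZ {X : Type*} (f : X ≃ X) : ℤ → X → X
  | Int.ofNat n, x => (⇑f)^[n] x
  | Int.negSucc n, x => (⇑f.symm)^[n + 1] x

section Aux
variable {X : Type*} {V : Type*} [NormedAddCommGroup V] [NormedSpace ℝ V]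
  (f : X ≃ X) (A : X → (V →L[ℝ] V)ˣ)

lemma iter_symm_iter (n : ℕ) (x : X) : (⇑f)^[n] ((⇑f.symm)^[n] x) = x := by
  induction n generalizing x with
  | zero => rfl
  | succ n ih =>
    rw [Function.iterate_succ_apply' (⇑f), Function.iterate_succ_apply (⇑f.symm), ih,
      Equiv.apply_symm_apply]

lemma cocycle_succ' (n : ℕ) (x : X) :
    cocycle (⇑f) A (n + 1) x = A ((⇑f)^[n] x) * cocycle (⇑f) A n x := by
  induction n generalizing x with
  | zero => simp [cocycle]
  | succ n ih =>
    rw [show cocycle (⇑f) A (n + 2) x = cocycle (⇑f) A (n + 1) (f x) * A x from rfl, ih,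
      ← Function.iterate_succ_apply (⇑f),
      show cocycle (⇑f) A (n + 1) x = cocycle (⇑f) A n (f x) * A x from rfl, mul_assoc]

lemma cocycleZ_succ (m : ℤ) (x : X) :
    cocycleZ f A (m + 1) x = cocycleZ f A m (f x) * A x := by
  cases m with
  | ofNat n =>
    rw [show (Int.ofNat n) + 1 = Int.ofNat (n + 1) from rfl]
    rfl
  | negSucc n =>
    cases n with
    | zero =>
      rw [show (Int.negSucc 0) + 1 = (0 : ℤ) from rfl]
      show (1 : (V →L[ℝ] V)ˣ) = (cocycle (⇑f) A 1 ((⇑f.symm)^[1] (f x)))⁻¹ * A x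
      simp [cocycle, Function.iterate_one]
    | succ n =>
      rw [show (Int.negSucc (n + 1)) + 1 = Int.negSucc n from rfl]
      show (cocycle (⇑f) A (n + 1) ((⇑f.symm)^[n + 1] x))⁻¹
        = (cocycle (⇑f) A (n + 2) ((⇑f.symm)^[n + 2] (f x)))⁻¹ * A x
      have h1 : (⇑f.symm)^[n + 2] (f x) = (⇑f.symm)^[n + 1] x := by
        rw [Function.iterate_succ_apply (⇑f.symm) (n+1), Equiv.symm_apply_apply]
      rw [h1, cocycle_succ' f A (n + 1), iter_symm_iter, mul_inv_rev, mul_assoc,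
        inv_mul_cancel, mul_one]

lemma iterZ_succ (m : ℤ) (x : X) : iterZ f (m + 1) x = iterZ f m (f x) := by
  cases m with
  | ofNat n =>
    rw [show (Int.ofNat n) + 1 = Int.ofNat (n + 1) from rfl]
    exact Function.iterate_succ_apply (⇑f) n x
  | negSucc n =>
    cases n with
    | zero =>
      rw [show (Int.negSucc 0) + 1 = (0 : ℤ) from rfl]
      show x = (⇑f.symm)^[1] (f x)
      simp
    | succ n =>
      rw [show (Int.negSucc (n + 1)) + 1 = Int.negSucc n from rfl]
      show (⇑f.symm)^[n + 1] x = (⇑f.symm)^[n + 2] (f x)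
      rw [Function.iterate_succ_apply (⇑f.symm) (n + 1), Equiv.symm_apply_apply]

lemma cocycleZ_add (n k : ℤ) (x : X) :
    cocycleZ f A (n + k) x = cocycleZ f A n (iterZ f k x) * cocycleZ f A k x := by
  induction k using Int.induction_on generalizing x with
  | zero =>
    rw [add_zero]
    show cocycleZ f A n x = cocycleZ f A n x * 1
    rw [mul_one]
  | succ k ih =>
    rw [show n + ((k : ℤ) + 1) = (n + k) + 1 by ring, cocycleZ_succ, ih,
      iterZ_succ, cocycleZ_succ, mul_assoc]
  | pred k ih =>
    set y := f.symm x with hy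
    have hfy : f y = x := f.apply_symm_apply x
    have e1 : cocycleZ f A (n + (-(k:ℤ) - 1)) x
        = cocycleZ f A (n + -(k:ℤ)) y * (A y)⁻¹ := by
      have := cocycleZ_succ f A (n + (-(k:ℤ) - 1)) y
      rw [hfy] at this
      rw [show n + (-(k:ℤ) - 1) + 1 = n + -(k:ℤ) by ring] at this
      rw [this, mul_assoc, mul_inv_cancel, mul_one]
    have e2 : iterZ f (-(k:ℤ)) y = iterZ f (-(k:ℤ) - 1) x := by
      have := iterZ_succ f (-(k:ℤ) - 1) y
      rw [hfy, show -(k:ℤ) - 1 + 1 = -(k:ℤ) by ring] at this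
      exact this
    have e3 : cocycleZ f A (-(k:ℤ)) y = cocycleZ f A (-(k:ℤ) - 1) x * A y := by
      have := cocycleZ_succ f A (-(k:ℤ) - 1) y
      rw [hfy, show -(k:ℤ) - 1 + 1 = -(k:ℤ) by ring] at this
      exact this
    rw [e1, ih y, e2, e3, mul_assoc, mul_assoc, mul_inv_cancel, mul_one]

end Aux

lemma sqrt_exp' (a : ℝ) : Real.sqrt (Real.exp a) = Real.exp (a / 2) := by
  rw [show Real.exp a = Real.exp (a / 2) ^ 2 by rw [sq, ← Real.exp_add]; ring_nf,
    Real.sqrt_sq (Real.exp_pos _).le]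

lemma tsum_shift_bounds (lam ε : ℝ) (hε : 0 < ε) (g : ℤ → ℝ) (hg0 : ∀ n, 0 ≤ g n)
    (hsum : Summable fun n : ℤ => g n * Real.exp (-2 * lam * (n : ℝ) - ε * |(n : ℝ)|))
    (k : ℤ) :
    Summable (fun n : ℤ => g (n + k) * Real.exp (-2 * lam * (n : ℝ) - ε * |(n : ℝ)|)) ∧
    Real.exp ((k : ℝ) * lam - ε * |(k : ℝ)|) *
        Real.sqrt (∑' n : ℤ, g n * Real.exp (-2 * lam * (n : ℝ) - ε * |(n : ℝ)|)) ≤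
      Real.sqrt (∑' n : ℤ, g (n + k) * Real.exp (-2 * lam * (n : ℝ) - ε * |(n : ℝ)|)) ∧
    Real.sqrt (∑' n : ℤ, g (n + k) * Real.exp (-2 * lam * (n : ℝ) - ε * |(n : ℝ)|)) ≤
      Real.exp ((k : ℝ) * lam + ε * |(k : ℝ)|) *
        Real.sqrt (∑' n : ℤ, g n * Real.exp (-2 * lam * (n : ℝ) - ε * |(n : ℝ)|)) := by
  set G : ℤ → ℝ := fun n => g n * Real.exp (-2 * lam * (n : ℝ) - ε * |(n : ℝ)|) with hG
  set H : ℤ → ℝ := fun n => g (n + k) * Real.exp (-2 * lam * (n : ℝ) - ε * |(n : ℝ)|) with hH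
  have hGnn : ∀ n, 0 ≤ G n := fun n => mul_nonneg (hg0 n) (Real.exp_pos _).le
  have hHnn : ∀ n, 0 ≤ H n := fun n => mul_nonneg (hg0 _) (Real.exp_pos _).le
  -- key pointwise identity
  have key : ∀ n : ℤ, H n = G (n + k) * Real.exp (2 * lam * k + ε * (|((n : ℝ) + k)| - |(n : ℝ)|)) := by
    intro n
    have hexp : Real.exp (-2 * lam * ((n : ℝ) + k) - ε * |((n : ℝ) + k)|) *
        Real.exp (2 * lam * k + ε * (|((n : ℝ) + k)| - |(n : ℝ)|)) =
        Real.exp (-2 * lam * (n : ℝ) - ε * |(n : ℝ)|) := by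
      rw [← Real.exp_add]; congr 1; ring
    simp only [hG, hH, Int.cast_add]
    conv_rhs => rw [mul_assoc]
    rw [hexp]
  have habs_le : ∀ n : ℤ, |((n : ℝ) + k)| - |(n : ℝ)| ≤ |(k : ℝ)| := by
    intro n
    have := abs_add_le (n : ℝ) (k : ℝ)
    linarith
  have habs_ge : ∀ n : ℤ, -|(k : ℝ)| ≤ |((n : ℝ) + k)| - |(n : ℝ)| := by
    intro n
    have := abs_sub_abs_le_abs_sub (n : ℝ) ((n : ℝ) + k)
    have h2 : |(n : ℝ) - ((n : ℝ) + k)| = |(k : ℝ)| := by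
      rw [show (n : ℝ) - ((n : ℝ) + k) = -(k : ℝ) by ring, abs_neg]
    rw [h2] at this
    linarith
  have hub : ∀ n : ℤ, H n ≤ G (n + k) * Real.exp (2 * lam * k + ε * |(k : ℝ)|) := by
    intro n
    rw [key n]
    apply mul_le_mul_of_nonneg_left _ (hGnn _)
    apply Real.exp_le_exp.2
    have := habs_le n
    nlinarith [hε.le]
  have hlb : ∀ n : ℤ, G (n + k) * Real.exp (2 * lam * k - ε * |(k : ℝ)|) ≤ H n := by
    intro n
    rw [key n]
    apply mul_le_mul_of_nonneg_left _ (hGnn _)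
    apply Real.exp_le_exp.2
    have := habs_ge n
    nlinarith [hε.le]
  have hGk : Summable fun n : ℤ => G (n + k) :=
    (Equiv.addRight k).summable_iff.2 hsum
  have hHsum : Summable H :=
    Summable.of_nonneg_of_le hHnn hub (hGk.mul_right _)
  have htsumGk : (∑' n : ℤ, G (n + k)) = ∑' n : ℤ, G n :=
    (Equiv.addRight k).tsum_eq G
  have hS0nn : 0 ≤ ∑' n : ℤ, G n := tsum_nonneg hGnn
  have hupper : (∑' n : ℤ, H n) ≤ Real.exp (2 * lam * k + ε * |(k : ℝ)|) * ∑' n : ℤ, G n := by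
    calc (∑' n : ℤ, H n) ≤ ∑' n : ℤ, G (n + k) * Real.exp (2 * lam * k + ε * |(k : ℝ)|) :=
          Summable.tsum_le_tsum hub hHsum (hGk.mul_right _)
      _ = Real.exp (2 * lam * k + ε * |(k : ℝ)|) * ∑' n : ℤ, G (n + k) := by
          rw [tsum_mul_right, mul_comm]
      _ = _ := by rw [htsumGk]
  have hlower : Real.exp (2 * lam * k - ε * |(k : ℝ)|) * (∑' n : ℤ, G n) ≤ ∑' n : ℤ, H n := by
    calc Real.exp (2 * lam * k - ε * |(k : ℝ)|) * (∑' n : ℤ, G n)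
        = ∑' n : ℤ, G (n + k) * Real.exp (2 * lam * k - ε * |(k : ℝ)|) := by
          rw [tsum_mul_right, mul_comm, htsumGk]
      _ ≤ ∑' n : ℤ, H n := Summable.tsum_le_tsum hlb (hGk.mul_right _) hHsum
  refine ⟨hHsum, ?_, ?_⟩
  · calc Real.exp ((k : ℝ) * lam - ε * |(k : ℝ)|) * Real.sqrt (∑' n : ℤ, G n)
        ≤ Real.exp ((2 * lam * k - ε * |(k : ℝ)|) / 2) * Real.sqrt (∑' n : ℤ, G n) := by
          apply mul_le_mul_of_nonneg_right _ (Real.sqrt_nonneg _)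
          apply Real.exp_le_exp.2
          have h1 : 0 ≤ ε * |(k : ℝ)| := mul_nonneg hε.le (abs_nonneg _)
          linarith
      _ = Real.sqrt (Real.exp (2 * lam * k - ε * |(k : ℝ)|) * ∑' n : ℤ, G n) := by
          rw [Real.sqrt_mul (Real.exp_pos _).le, sqrt_exp']
      _ ≤ Real.sqrt (∑' n : ℤ, H n) := Real.sqrt_le_sqrt hlower
  · calc Real.sqrt (∑' n : ℤ, H n)
        ≤ Real.sqrt (Real.exp (2 * lam * k + ε * |(k : ℝ)|) * ∑' n : ℤ, G n) :=
          Real.sqrt_le_sqrt hupper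
      _ = Real.exp ((2 * lam * k + ε * |(k : ℝ)|) / 2) * Real.sqrt (∑' n : ℤ, G n) := by
          rw [Real.sqrt_mul (Real.exp_pos _).le, sqrt_exp']
      _ ≤ Real.exp ((k : ℝ) * lam + ε * |(k : ℝ)|) * Real.sqrt (∑' n : ℤ, G n) := by
          apply mul_le_mul_of_nonneg_right _ (Real.sqrt_nonneg _)
          apply Real.exp_le_exp.2
          have h1 : 0 ≤ ε * |(k : ℝ)| := mul_nonneg hε.le (abs_nonneg _)
          linarith

/-- comparison of the (squared) Lyapunov sums
`S_k(u) = Σ_{n∈ℤ} ‖A^n_{f^k x}(A^k_x u)‖²·e^{−2λn−ε|n|}` with `S_0(u)`: each `S_k`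
converges and `e^{kλ−ε|k|}·√S_0(u) ≤ √S_k(u) ≤ e^{kλ+ε|k|}·√S_0(u)`. -/
theorem lyapunov_norm_growth_findim {X : Type*} {d : ℕ} (f : X ≃ X)
    (A : X → (EuclideanSpace ℝ (Fin d) →L[ℝ] EuclideanSpace ℝ (Fin d))ˣ)
    (lam ε : ℝ) (hε : 0 < ε) (x : X) (u : EuclideanSpace ℝ (Fin d))
    (hsum : Summable fun n : ℤ =>
      ‖(cocycleZ f A n x).val u‖ ^ 2 * Real.exp (-2 * lam * (n : ℝ) - ε * |(n : ℝ)|)) :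
    ∀ k : ℤ,
      Summable (fun n : ℤ =>
        ‖(cocycleZ f A n (iterZ f k x)).val ((cocycleZ f A k x).val u)‖ ^ 2 *
          Real.exp (-2 * lam * (n : ℝ) - ε * |(n : ℝ)|)) ∧
      Real.exp ((k : ℝ) * lam - ε * |(k : ℝ)|) *
          Real.sqrt (∑' n : ℤ, ‖(cocycleZ f A n x).val u‖ ^ 2 *
            Real.exp (-2 * lam * (n : ℝ) - ε * |(n : ℝ)|)) ≤
        Real.sqrt (∑' n : ℤ, ‖(cocycleZ f A n (iterZ f k x)).val ((cocycleZ f A k x).val u)‖ ^ 2 *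
          Real.exp (-2 * lam * (n : ℝ) - ε * |(n : ℝ)|)) ∧
      Real.sqrt (∑' n : ℤ, ‖(cocycleZ f A n (iterZ f k x)).val ((cocycleZ f A k x).val u)‖ ^ 2 *
          Real.exp (-2 * lam * (n : ℝ) - ε * |(n : ℝ)|)) ≤
        Real.exp ((k : ℝ) * lam + ε * |(k : ℝ)|) *
          Real.sqrt (∑' n : ℤ, ‖(cocycleZ f A n x).val u‖ ^ 2 *
            Real.exp (-2 * lam * (n : ℝ) - ε * |(n : ℝ)|)) := by
  intro k
  have hrw : ∀ n : ℤ, (cocycleZ f A n (iterZ f k x)).val ((cocycleZ f A k x).val u)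
      = (cocycleZ f A (n + k) x).val u := by
    intro n
    rw [cocycleZ_add f A n k x, Units.val_mul, ContinuousLinearMap.mul_apply]
  simp only [hrw]
  exact tsum_shift_bounds lam ε hε (fun n => ‖(cocycleZ f A n x).val u‖ ^ 2)
    (fun n => by positivity) hsum k
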